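/- arXiv:2008.12465 — 5 statements merged into one kernel-verified Lean document; each statement's English description precedes it below -/
import Mathlib

section
/- For all complex z with |Im(z)| < π, if cos(Im(z)) ≥ 0 then 1/|1 + e^z| ≤ 1, and if cos(Im(z)) ≤ 0 then 1/|1 + e^z| ≤ 1/|sin(Im(z))|. -/
theorem stmt_0 (z : ℂ) (hz : |z.im| < Real.pi) :
    (0 ≤ Real.cos z.im → 1 / ‖1 + Complex.exp z‖ ≤ 1) ∧
    (Real.cos z.im ≤ 0 →
      1 / ‖1 + Complex.exp z‖ ≤ 1 / |Real.sin z.im|) := by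
  set x := z.re with hx
  set y := z.im with hy
  set a := ‖1 + Complex.exp z‖ with ha
  have ha0 : 0 ≤ a := norm_nonneg _
  have hsq : a ^ 2 = (1 + Real.exp x * Real.cos y) ^ 2 + (Real.exp x * Real.sin y) ^ 2 := by
    rw [ha, Complex.sq_norm, Complex.normSq_apply]
    simp [Complex.exp_re, Complex.exp_im]
    ring
  have hsc : Real.sin y ^ 2 + Real.cos y ^ 2 = 1 := Real.sin_sq_add_cos_sq y
  have hex : 0 < Real.exp x := Real.exp_pos x
  constructor
  · intro hcos
    have h1 : 1 ≤ a := by nlinarith [sq_nonneg (Real.exp x)]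
    calc 1 / a ≤ 1 / 1 := one_div_le_one_div_of_le one_pos h1
    _ = 1 := by norm_num
  · intro hcos
    have hsin : Real.sin y ≠ 0 := by
      intro h0
      have hy0 : y = 0 :=
        (Real.sin_eq_zero_iff_of_lt_of_lt (abs_lt.mp hz).1 (abs_lt.mp hz).2).mp h0
      rw [hy0] at hcos
      simp at hcos
      linarith [hcos]
    have hpos : 0 < |Real.sin y| := abs_pos.mpr hsin
    have hle : |Real.sin y| ≤ a := by
      have h2 : |Real.sin y| ^ 2 ≤ a ^ 2 := by
        nlinarith [sq_abs (Real.sin y), sq_nonneg (Real.cos y + Real.exp x)]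
      exact (pow_le_pow_iff_left₀ (abs_nonneg _) ha0 two_ne_zero).mp h2
    exact one_div_le_one_div_of_le hpos hle
end

section
/- For every complex z with |Im(z)| < π, the improper integral ∫₀^∞ ξ/(1 + e^{ξ-z}) dξ converges and equals -Li₂(-e^z). -/
open Complex MeasureTheory Set Filter Topology

namespace Stmt5Aux

variable {z : ℂ}

lemma c0_pos (hz : |z.im| < Real.pi) : 0 < Real.cos (z.im / 2) := by
  rw [abs_lt] at hz
  exact Real.cos_pos_of_mem_Ioo ⟨by linarith, by linarith⟩

lemma key (hz : |z.im| < Real.pi) (u : ℂ) (him : u.im = z.im ∨ u.im = -z.im) :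
    Real.cos (z.im / 2) * max 1 (Real.exp u.re) ≤ ‖1 + Complex.exp u‖ := by
  have hc : Real.cos u.im = Real.cos z.im := by
    rcases him with h | h <;> rw [h] <;> simp [Real.cos_neg]
  set c₀ := Real.cos (z.im / 2) with hc₀def
  have hc0 : 0 < c₀ := c0_pos hz
  set r := Real.exp u.re with hr
  have hrpos : 0 < r := Real.exp_pos _
  have hnormsq : ‖1 + Complex.exp u‖ ^ 2 = 1 + 2 * r * Real.cos z.im + r ^ 2 := by
    rw [Complex.sq_norm, normSq_add]
    simp [Complex.normSq_eq_norm_sq, Complex.norm_exp, Complex.exp_re, hc, ← hr]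
    ring
  have hcsq : c₀ ^ 2 = 1 / 2 + Real.cos z.im / 2 := by
    rw [hc₀def, Real.cos_sq]
    rw [show 2 * (z.im / 2) = z.im by ring]
  have hcle : Real.cos z.im ≤ 1 := Real.cos_le_one _
  have hcge : -1 ≤ Real.cos z.im := Real.neg_one_le_cos _
  have hmax : (max 1 r) ^ 2 ≤ 1 + r ^ 2 := by
    rcases le_total 1 r with h | h
    · rw [max_eq_right h]; nlinarith
    · rw [max_eq_left h]; nlinarith
  have h1 : (c₀ * max 1 r) ^ 2 ≤ ‖1 + Complex.exp u‖ ^ 2 := by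
    rw [hnormsq, mul_pow, hcsq]
    nlinarith [sq_nonneg (r - 1), hrpos.le]
  calc c₀ * max 1 r = Real.sqrt ((c₀ * max 1 r) ^ 2) := (Real.sqrt_sq (by positivity)).symm
    _ ≤ Real.sqrt (‖1 + Complex.exp u‖ ^ 2) := Real.sqrt_le_sqrt h1
    _ = ‖1 + Complex.exp u‖ := Real.sqrt_sq (norm_nonneg _)

lemma key1 (hz : |z.im| < Real.pi) (u : ℂ) (him : u.im = z.im ∨ u.im = -z.im) :
    Real.cos (z.im / 2) ≤ ‖1 + Complex.exp u‖ := by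
  have := key hz u him
  have hc0 := c0_pos hz
  nlinarith [le_max_left 1 (Real.exp u.re)]

lemma key2 (hz : |z.im| < Real.pi) (u : ℂ) (him : u.im = z.im ∨ u.im = -z.im) :
    Real.cos (z.im / 2) * Real.exp u.re ≤ ‖1 + Complex.exp u‖ := by
  have := key hz u him
  have hc0 := c0_pos hz
  nlinarith [le_max_right 1 (Real.exp u.re)]

lemma ne_zero' (hz : |z.im| < Real.pi) (u : ℂ) (him : u.im = z.im ∨ u.im = -z.im) :
    1 + Complex.exp u ≠ 0 := by
  intro h
  have := key1 hz u him
  rw [h, norm_zero] at this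
  exact absurd this (not_le.mpr (c0_pos hz))

lemma him1 (x : ℝ) : ((x : ℂ) - z).im = z.im ∨ ((x : ℂ) - z).im = -z.im := by
  right; simp

lemma him2 (x : ℝ) : (z - (x : ℂ)).im = z.im ∨ (z - (x : ℂ)).im = -z.im := by
  left; simp

lemma exp_sub_eq (z : ℂ) (x : ℝ) :
    Complex.exp (z - (x : ℂ)) = ((Real.exp (-x) : ℝ) : ℂ) * Complex.exp z := by
  rw [sub_eq_add_neg, Complex.exp_add, mul_comm]
  congr 1
  rw [← Complex.ofReal_neg, ← Complex.ofReal_exp]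

lemma slit_aux (hz : |z.im| < Real.pi) (r : ℝ) (hr : 0 < r) :
    1 + (r : ℂ) * Complex.exp z ∈ Complex.slitPlane := by
  rw [Complex.mem_slitPlane_iff]
  rcases eq_or_ne z.im 0 with h0 | h0
  · left
    have : (1 + (r : ℂ) * Complex.exp z).re = 1 + r * (Real.exp z.re * Real.cos z.im) := by
      simp [Complex.add_re, Complex.re_ofReal_mul, Complex.exp_re]
    rw [this, h0]
    simp only [Real.cos_zero, mul_one]
    positivity
  · right
    have : (1 + (r : ℂ) * Complex.exp z).im = r * (Real.exp z.re * Real.sin z.im) := by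
      simp [Complex.add_im, Complex.im_ofReal_mul, Complex.exp_im]
    rw [this]
    have hsin : Real.sin z.im ≠ 0 := by
      rw [abs_lt] at hz
      rw [ne_eq, Real.sin_eq_zero_iff_of_lt_of_lt hz.1 hz.2]
      exact h0
    positivity

lemma slit1 (hz : |z.im| < Real.pi) (x : ℝ) :
    1 + Complex.exp (z - (x : ℂ)) ∈ Complex.slitPlane := by
  rw [exp_sub_eq]
  exact slit_aux hz _ (Real.exp_pos _)

lemma slit2 (hz : |z.im| < Real.pi) {t : ℝ} (ht : 0 < t) :
    1 + Complex.exp z * (t : ℂ) ∈ Complex.slitPlane := by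
  rw [mul_comm]
  exact slit_aux hz t ht

lemma hasDerivAt_v (hz : |z.im| < Real.pi) (x : ℝ) :
    HasDerivAt (fun x : ℝ => Complex.log (1 + Complex.exp (z - (x : ℂ))))
      (-(1 / (1 + Complex.exp ((x : ℂ) - z)))) x := by
  have h1 : HasDerivAt (fun w : ℂ => 1 + Complex.exp (z - w)) (-Complex.exp (z - (x : ℂ)))
      (x : ℂ) := by
    have hin : HasDerivAt (fun w : ℂ => z - w) (-1) (x : ℂ) := (hasDerivAt_id _).const_sub z
    have := (Complex.hasDerivAt_exp (z - (x : ℂ))).comp (x : ℂ) hin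
    simpa using this.const_add 1
  have h2 := (Complex.hasDerivAt_log (slit1 hz x)).comp (x : ℂ) h1
  have h3 := h2.comp_ofReal
  convert h3 using 1
  · rfl
  have ha : 1 + Complex.exp ((x : ℂ) - z) ≠ 0 := Stmt5Aux.ne_zero' hz _ (him1 x)
  have hb : 1 + Complex.exp (z - (x : ℂ)) ≠ 0 := Stmt5Aux.ne_zero' hz _ (him2 x)
  have hab : Complex.exp ((x : ℂ) - z) * Complex.exp (z - (x : ℂ)) = 1 := by
    rw [← Complex.exp_add]
    simp
  field_simp
  linear_combination hab

lemma cont_v (hz : |z.im| < Real.pi) :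
    Continuous (fun x : ℝ => Complex.log (1 + Complex.exp (z - (x : ℂ)))) := by
  rw [continuous_iff_continuousAt]
  intro x
  have hin : Continuous (fun x : ℝ => 1 + Complex.exp (z - (x : ℂ))) := by continuity
  show ContinuousAt (Complex.log ∘ fun x : ℝ => 1 + Complex.exp (z - (x : ℂ))) x
  exact ContinuousAt.comp (x := x) (continuousAt_clog (slit1 hz x)) hin.continuousAt

lemma cont_f (hz : |z.im| < Real.pi) :
    Continuous (fun x : ℝ => (x : ℂ) / (1 + Complex.exp ((x : ℂ) - z))) :=
  Complex.continuous_ofReal.div (by continuity) (fun x => ne_zero' hz _ (him1 x))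

lemma I1 (hz : |z.im| < Real.pi) :
    IntegrableOn (fun x : ℝ => (x : ℂ) / (1 + Complex.exp ((x : ℂ) - z))) (Ioi 0) := by
  set c₀ := Real.cos (z.im / 2) with hc₀
  have hc0 : 0 < c₀ := c0_pos hz
  have hg : IntegrableOn (fun x : ℝ => (Real.exp z.re / c₀) * (Real.exp (-x) * x)) (Ioi 0) := by
    have h2 := Real.GammaIntegral_convergent (by norm_num : (0:ℝ) < 2)
    have heq : EqOn (fun x : ℝ => Real.exp (-x) * x ^ ((2:ℝ) - 1))
        (fun x : ℝ => Real.exp (-x) * x) (Ioi 0) := by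
      intro x hx
      norm_num
    exact (h2.congr_fun heq measurableSet_Ioi).const_mul _
  refine Integrable.mono' hg ((cont_f hz).aestronglyMeasurable.restrict) ?_
  rw [ae_restrict_iff' measurableSet_Ioi]
  refine ae_of_all _ fun x hx => ?_
  have hx0 : (0:ℝ) < x := hx
  have hkey : c₀ * Real.exp (x - z.re) ≤ ‖1 + Complex.exp ((x:ℂ) - z)‖ := by
    have := key2 hz ((x:ℂ) - z) (him1 x)
    simpa using this
  have hden : (0:ℝ) < c₀ * Real.exp (x - z.re) := by positivity
  calc ‖(x:ℂ) / (1 + Complex.exp ((x:ℂ) - z))‖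
      = x / ‖1 + Complex.exp ((x:ℂ) - z)‖ := by
        rw [norm_div, Complex.norm_real, Real.norm_eq_abs, abs_of_pos hx0]
    _ ≤ x / (c₀ * Real.exp (x - z.re)) := by
        apply div_le_div_of_nonneg_left hx0.le hden hkey
    _ = (Real.exp z.re / c₀) * (Real.exp (-x) * x) := by
        rw [Real.exp_sub, Real.exp_neg]
        field_simp

lemma I2 (hz : |z.im| < Real.pi) :
    IntegrableOn (fun x : ℝ => Complex.log (1 + Complex.exp (z - (x:ℂ)))) (Ioi 0) := by
  set x₀ : ℝ := max 1 (z.re + 1) with hx₀def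
  have hx₀ : (0:ℝ) < x₀ := lt_of_lt_of_le one_pos (le_max_left _ _)
  rw [← Ioc_union_Ioi_eq_Ioi hx₀.le, integrableOn_union]
  constructor
  · exact (cont_v hz).integrableOn_Ioc
  · have hgint : IntegrableOn (fun x : ℝ => (3/2 * Real.exp z.re) * Real.exp (-1*x)) (Ioi x₀) :=
      (exp_neg_integrableOn_Ioi x₀ one_pos).const_mul _
    refine Integrable.mono' hgint ((cont_v hz).aestronglyMeasurable.restrict) ?_
    rw [ae_restrict_iff' measurableSet_Ioi]
    refine ae_of_all _ fun x hx => ?_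
    have hxx : x₀ < x := hx
    have hnorm : ‖Complex.exp (z - (x:ℂ))‖ = Real.exp (z.re - x) := by
      rw [Complex.norm_exp]
      simp
    have hsmall : ‖Complex.exp (z - (x:ℂ))‖ ≤ 1/2 := by
      rw [hnorm]
      have h1 : z.re - x ≤ -1 := by
        have : z.re + 1 ≤ x₀ := le_max_right _ _
        linarith
      have h2 : (2:ℝ) ≤ Real.exp 1 := by nlinarith [Real.add_one_le_exp 1]
      have h3 : Real.exp (z.re - x) ≤ Real.exp (-1) := Real.exp_le_exp.mpr h1
      have h4 : Real.exp (-1) ≤ 1/2 := by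
        rw [Real.exp_neg]
        rw [inv_le_comm₀ (Real.exp_pos 1) (by norm_num)]
        norm_num
        linarith
      linarith
    have h5 := Complex.norm_log_one_add_half_le_self hsmall
    calc ‖Complex.log (1 + Complex.exp (z - (x:ℂ)))‖
        ≤ 3/2 * ‖Complex.exp (z - (x:ℂ))‖ := h5
      _ = (3/2 * Real.exp z.re) * Real.exp (-1*x) := by
          rw [hnorm, neg_one_mul, Real.exp_sub, Real.exp_neg]
          ring

lemma tendsto_xv (hz : |z.im| < Real.pi) :
    Tendsto (fun x : ℝ => (x:ℂ) * Complex.log (1 + Complex.exp (z - (x:ℂ)))) atTop (𝓝 0) := by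
  apply squeeze_zero_norm' (a := fun x : ℝ => (3/2 * Real.exp z.re) * (x ^ 1 * Real.exp (-x)))
  · filter_upwards [eventually_ge_atTop (max 0 (z.re + 1))] with x hx
    have hx0 : (0:ℝ) ≤ x := le_trans (le_max_left _ _) hx
    have hnorm : ‖Complex.exp (z - (x:ℂ))‖ = Real.exp (z.re - x) := by
      rw [Complex.norm_exp]
      simp
    have hsmall : ‖Complex.exp (z - (x:ℂ))‖ ≤ 1/2 := by
      rw [hnorm]
      have h1 : z.re - x ≤ -1 := by
        have := le_trans (le_max_right 0 (z.re + 1)) hx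
        linarith
      have h2 : (2:ℝ) ≤ Real.exp 1 := by nlinarith [Real.add_one_le_exp 1]
      have h3 : Real.exp (z.re - x) ≤ Real.exp (-1) := Real.exp_le_exp.mpr h1
      have h4 : Real.exp (-1) ≤ 1/2 := by
        rw [Real.exp_neg]
        rw [inv_le_comm₀ (Real.exp_pos 1) (by norm_num)]
        norm_num
        linarith
      linarith
    have h5 := Complex.norm_log_one_add_half_le_self hsmall
    calc ‖(x:ℂ) * Complex.log (1 + Complex.exp (z - (x:ℂ)))‖
        = x * ‖Complex.log (1 + Complex.exp (z - (x:ℂ)))‖ := by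
          rw [norm_mul, Complex.norm_real, Real.norm_eq_abs, _root_.abs_of_nonneg hx0]
      _ ≤ x * (3/2 * ‖Complex.exp (z - (x:ℂ))‖) :=
          mul_le_mul_of_nonneg_left h5 hx0
      _ = (3/2 * Real.exp z.re) * (x ^ 1 * Real.exp (-x)) := by
          rw [hnorm, Real.exp_sub, Real.exp_neg]
          field_simp
  · have := (Real.tendsto_pow_mul_exp_neg_atTop_nhds_zero 1).const_mul (3/2 * Real.exp z.re)
    simpa using this

lemma ibp (hz : |z.im| < Real.pi) :
    ∫ x in Ioi (0:ℝ), (x:ℂ) / (1 + Complex.exp ((x:ℂ) - z))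
      = ∫ x in Ioi (0:ℝ), Complex.log (1 + Complex.exp (z - (x:ℂ))) := by
  have hu : ∀ x ∈ Ioi (0:ℝ), HasDerivAt (fun x : ℝ => (x:ℂ)) 1 x := fun x _ => by
    exact Complex.ofRealCLM.hasDerivAt
  have huv' : IntegrableOn ((fun x : ℝ => (x:ℂ)) *
      (fun x : ℝ => -(1 / (1 + Complex.exp ((x:ℂ) - z))))) (Ioi 0) := by
    refine IntegrableOn.congr_fun (Integrable.neg (I1 hz)) ?_ measurableSet_Ioi
    intro x _
    simp only [Pi.mul_apply, Pi.neg_apply]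
    ring
  have hu'v : IntegrableOn ((fun _ : ℝ => (1:ℂ)) *
      (fun x : ℝ => Complex.log (1 + Complex.exp (z - (x:ℂ))))) (Ioi 0) := by
    refine IntegrableOn.congr_fun (I2 hz) ?_ measurableSet_Ioi
    intro x _
    simp
  have hzero : Tendsto ((fun x : ℝ => (x:ℂ)) *
      (fun x : ℝ => Complex.log (1 + Complex.exp (z - (x:ℂ))))) (𝓝[>] (0:ℝ)) (𝓝 0) := by
    have hcont : Continuous (fun x : ℝ => (x:ℂ) * Complex.log (1 + Complex.exp (z - (x:ℂ)))) :=
      Complex.continuous_ofReal.mul (cont_v hz)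
    have := (hcont.tendsto 0).mono_left (nhdsWithin_le_nhds : 𝓝[>] (0:ℝ) ≤ 𝓝 0)
    simp at this
    exact this
  have hinfty : Tendsto ((fun x : ℝ => (x:ℂ)) *
      (fun x : ℝ => Complex.log (1 + Complex.exp (z - (x:ℂ))))) atTop (𝓝 0) := tendsto_xv hz
  have h := integral_Ioi_mul_deriv_eq_deriv_mul hu (fun x _ => hasDerivAt_v hz x)
    huv' hu'v hzero hinfty
  have e1 : ∀ x : ℝ, (x:ℂ) * (-(1 / (1 + Complex.exp ((x:ℂ) - z))))
      = -((x:ℂ) / (1 + Complex.exp ((x:ℂ) - z))) := fun x => by ring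
  simp only [e1, one_mul, integral_neg, sub_zero, zero_sub] at h
  exact neg_inj.mp h

lemma hslope : Tendsto (fun w : ℂ => Complex.log (1 + w) / w) (𝓝[≠] (0:ℂ)) (𝓝 1) := by
  have hd : HasDerivAt (fun w : ℂ => Complex.log (1 + w)) 1 0 := by
    have hin : HasDerivAt (fun w : ℂ => 1 + w) 1 (0:ℂ) := (hasDerivAt_id (0:ℂ)).const_add 1
    have hsl : (1 : ℂ) + 0 ∈ Complex.slitPlane := by
      rw [Complex.mem_slitPlane_iff]
      norm_num
    have := (Complex.hasDerivAt_log hsl).comp (0:ℂ) hin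
    simp at this
    exact this
  rw [hasDerivAt_iff_tendsto_slope] at hd
  refine hd.congr' ?_
  filter_upwards [self_mem_nhdsWithin] with w hw
  rw [slope_def_field]
  simp

lemma contAt_g (hz : |z.im| < Real.pi) {t : ℝ} (ht : 0 < t) :
    ContinuousAt (fun t : ℝ => Complex.log (1 + Complex.exp z * t) / t) t := by
  apply ContinuousAt.div
  · exact ContinuousAt.comp (x := t) (continuousAt_clog (slit2 hz ht))
      (continuous_const.add (continuous_const.mul Complex.continuous_ofReal)).continuousAt
  · exact Complex.continuous_ofReal.continuousAt
  · exact Complex.ofReal_ne_zero.mpr ht.ne'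

lemma tendsto_g (hz : |z.im| < Real.pi) :
    Tendsto (fun t : ℝ => Complex.log (1 + Complex.exp z * t) / t) (𝓝[>] (0:ℝ))
      (𝓝 (Complex.exp z)) := by
  have hmap : Tendsto (fun t : ℝ => Complex.exp z * t) (𝓝[>] (0:ℝ)) (𝓝[≠] (0:ℂ)) := by
    rw [tendsto_nhdsWithin_iff]
    constructor
    · have hc : Continuous (fun t : ℝ => Complex.exp z * (t:ℂ)) := by continuity
      have := (hc.tendsto 0).mono_left (nhdsWithin_le_nhds : 𝓝[>] (0:ℝ) ≤ 𝓝 0)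
      simpa using this
    · filter_upwards [self_mem_nhdsWithin] with t ht
      exact mul_ne_zero (Complex.exp_ne_zero z) (Complex.ofReal_ne_zero.mpr (ne_of_gt ht))
  have h2 := (hslope.comp hmap).const_mul (Complex.exp z)
  have heq : (fun t : ℝ => Complex.exp z * ((fun w : ℂ => Complex.log (1 + w) / w)
      ((fun t : ℝ => Complex.exp z * t) t)))
      =ᶠ[𝓝[>] (0:ℝ)] (fun t : ℝ => Complex.log (1 + Complex.exp z * t) / t) := by
    filter_upwards [self_mem_nhdsWithin] with t ht
    have h3 : (t:ℂ) ≠ 0 := Complex.ofReal_ne_zero.mpr (ne_of_gt ht)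
    have h4 : Complex.exp z ≠ 0 := Complex.exp_ne_zero z
    field_simp
  have := Tendsto.congr' heq (by simpa using h2)
  simpa using this

lemma Ig (hz : |z.im| < Real.pi) :
    IntegrableOn (fun t : ℝ => Complex.log (1 + Complex.exp z * t) / t) (Ioc 0 1) := by
  set G : ℝ → ℂ := fun t =>
    if t = 0 then Complex.exp z else Complex.log (1 + Complex.exp z * t) / t with hGdef
  have hGcont : ContinuousOn G (Icc 0 1) := by
    intro t ht
    rcases eq_or_ne t 0 with rfl | ht0
    · rw [← continuousWithinAt_diff_self]
      have hle : 𝓝[Icc (0:ℝ) 1 \ {0}] (0:ℝ) ≤ 𝓝[>] (0:ℝ) := by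
        apply nhdsWithin_mono
        intro x hx
        exact lt_of_le_of_ne hx.1.1 (Ne.symm hx.2)
      have h1 := (tendsto_g hz).mono_left hle
      have h2 : G 0 = Complex.exp z := by simp [hGdef]
      rw [ContinuousWithinAt, h2]
      refine Tendsto.congr' ?_ h1
      filter_upwards [self_mem_nhdsWithin] with x hx
      have : x ≠ 0 := hx.2
      simp [hGdef, this]
    · apply ContinuousAt.continuousWithinAt
      have ht' : 0 < t := lt_of_le_of_ne ht.1 (Ne.symm ht0)
      refine (contAt_g hz ht').congr ?_
      filter_upwards [eventually_ne_nhds ht0] with x hx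
      simp [hGdef, hx]
  have hGint : IntegrableOn G (Icc 0 1) := hGcont.integrableOn_Icc
  refine IntegrableOn.congr_fun (hGint.mono_set Ioc_subset_Icc_self) ?_ measurableSet_Ioc
  intro t ht
  simp [hGdef, ht.1.ne']

lemma subst (hz : |z.im| < Real.pi) :
    ∫ x in Ioi (0:ℝ), Complex.log (1 + Complex.exp (z - (x:ℂ)))
      = ∫ t in Ioc (0:ℝ) 1, Complex.log (1 + Complex.exp z * t) / t := by
  set g : ℝ → ℂ := fun t => Complex.log (1 + Complex.exp z * t) / t with hgdef
  have hB : ∀ M : ℝ, 0 < M → ∫ x in (0:ℝ)..M, Complex.log (1 + Complex.exp (z - (x:ℂ)))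
      = ∫ t in Ioc (Real.exp (-M)) 1, g t := by
    intro M hM
    have hf : ∀ x ∈ uIcc (0:ℝ) M, HasDerivAt (fun x : ℝ => Real.exp (-x)) (-Real.exp (-x)) x := by
      intro x _
      exact ((Real.hasDerivAt_exp (-x)).comp x (hasDerivAt_neg x)).congr_deriv (by simp)
    have hf' : ContinuousOn (fun x : ℝ => -Real.exp (-x)) (uIcc 0 M) :=
      (by continuity : Continuous (fun x : ℝ => -Real.exp (-x))).continuousOn
    have himg : (fun x : ℝ => Real.exp (-x)) '' (uIcc 0 M) ⊆ Ioi 0 := by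
      rintro _ ⟨x, _, rfl⟩
      exact Real.exp_pos _
    have hgc : ContinuousOn g ((fun x : ℝ => Real.exp (-x)) '' (uIcc 0 M)) := by
      intro t htm
      exact (contAt_g hz (himg htm)).continuousWithinAt
    have h := intervalIntegral.integral_comp_smul_deriv' hf hf' hgc
    simp only [Function.comp_apply] at h
    have heq : ∀ x : ℝ, (-Real.exp (-x)) • g (Real.exp (-x))
        = -(Complex.log (1 + Complex.exp (z - (x:ℂ)))) := by
      intro x
      have hne : ((Real.exp (-x) : ℝ) : ℂ) ≠ 0 := Complex.ofReal_ne_zero.mpr (Real.exp_pos _).ne'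
      rw [hgdef]
      simp only [Complex.real_smul, Complex.ofReal_neg]
      rw [exp_sub_eq z x]
      field_simp
    have hle : Real.exp (-M) ≤ 1 := Real.exp_le_one_iff.mpr (by linarith)
    calc ∫ x in (0:ℝ)..M, Complex.log (1 + Complex.exp (z - (x:ℂ)))
        = -∫ x in (0:ℝ)..M, (-Real.exp (-x)) • g (Real.exp (-x)) := by
          rw [← intervalIntegral.integral_neg]
          apply intervalIntegral.integral_congr
          intro x _
          show Complex.log (1 + Complex.exp (z - (x:ℂ)))
            = -(-Real.exp (-x) • g (Real.exp (-x)))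
          rw [heq x, neg_neg]
      _ = -∫ t in Real.exp (-0)..Real.exp (-M), g t := by rw [h]
      _ = -∫ t in (1:ℝ)..Real.exp (-M), g t := by norm_num
      _ = ∫ t in Real.exp (-M)..(1:ℝ), g t := by rw [intervalIntegral.integral_symm, neg_neg]
      _ = ∫ t in Ioc (Real.exp (-M)) 1, g t := intervalIntegral.integral_of_le hle
  have T1 := intervalIntegral_tendsto_integral_Ioi 0 (I2 hz) tendsto_id
  have hUnion : (⋃ M : ℝ, Ioc (Real.exp (-M)) 1) = Ioc (0:ℝ) 1 := by
    ext t
    simp only [mem_iUnion, mem_Ioc]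
    constructor
    · rintro ⟨M, h1, h2⟩
      exact ⟨lt_trans (Real.exp_pos _) h1, h2⟩
    · rintro ⟨h1, h2⟩
      refine ⟨-(Real.log t) + 1, ?_, h2⟩
      have he : Real.exp (-(-Real.log t + 1)) = t * Real.exp (-1) := by
        rw [show -(-Real.log t + 1) = Real.log t + (-1) by ring, Real.exp_add, Real.exp_log h1]
      rw [he]
      have : Real.exp (-1) < 1 := Real.exp_lt_one_iff.mpr (by norm_num)
      nlinarith
  have T2 : Tendsto (fun M : ℝ => ∫ t in Ioc (Real.exp (-M)) 1, g t) atTop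
      (𝓝 (∫ t in Ioc (0:ℝ) 1, g t)) := by
    have hmono : Monotone (fun M : ℝ => Ioc (Real.exp (-M)) 1) := by
      intro M N h
      exact Ioc_subset_Ioc_left (Real.exp_le_exp.mpr (neg_le_neg h))
    have := tendsto_setIntegral_of_monotone (fun M : ℝ => measurableSet_Ioc) hmono
      (by rw [hUnion]; exact Ig hz)
    rwa [hUnion] at this
  refine tendsto_nhds_unique (T1.congr' ?_) T2
  filter_upwards [eventually_gt_atTop 0] with M hM
  exact hB M hM

end Stmt5Aux

/-- The dilogarithm, defined by the integral representation
`Li₂(w) = -∫₀¹ log(1 - w t)/t dt` (analytic continuation of `∑ w^k/k²`). -/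
noncomputable def Li2 (w : ℂ) : ℂ :=
  -∫ t in (0 : ℝ)..1, Complex.log (1 - w * (t : ℂ)) / (t : ℂ)

theorem stmt_5 (z : ℂ) (hz : |z.im| < Real.pi) :
    MeasureTheory.IntegrableOn
        (fun ξ : ℝ => (ξ : ℂ) / (1 + Complex.exp ((ξ : ℂ) - z))) (Set.Ioi 0) ∧
    ∫ ξ in Set.Ioi (0 : ℝ), (ξ : ℂ) / (1 + Complex.exp ((ξ : ℂ) - z))
      = -Li2 (-Complex.exp z) := by
  refine ⟨Stmt5Aux.I1 hz, ?_⟩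
  rw [Stmt5Aux.ibp hz, Stmt5Aux.subst hz, Li2, neg_neg,
    intervalIntegral.integral_of_le zero_le_one]
  simp only [neg_mul, sub_neg_eq_add]
end

section
/- The Fourier transform of the hyperbolic secant: for every real w, ∫_ℝ e^{2πiwx}/cosh(πx) dx = 1/cosh(πw). -/
open MeasureTheory Set Complex Real

-- step 1: Mellin of 1/(1+t)
lemma mellin_lem (a : ℂ) (h0 : 0 < a.re) (h1 : a.re < 1) :
    ∫ t in Set.Ioi (0:ℝ), (t:ℂ) ^ (a - 1) / (1 + t) = ↑Real.pi / Complex.sin (Real.pi * a) := by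
  have himg : (fun t : ℝ => t / (1 + t)) '' Set.Ioi 0 = Set.Ioo (0:ℝ) 1 := by
    ext y
    constructor
    · rintro ⟨t, ht, rfl⟩
      simp only [Set.mem_Ioi] at ht
      constructor
      · exact div_pos ht (by linarith)
      · rw [div_lt_one (by linarith)]; linarith
    · rintro ⟨hy0, hy1⟩
      refine ⟨y / (1 - y), Set.mem_Ioi.mpr (div_pos hy0 (by linarith)), ?_⟩
      have h1y : (1:ℝ) - y ≠ 0 := by linarith
      show (y/(1-y))/(1+y/(1-y)) = y
      have he : 1 + y/(1-y) = 1/(1-y) := by field_simp; ring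
      rw [he]; field_simp
  have hderiv : ∀ t ∈ Set.Ioi (0:ℝ),
      HasDerivWithinAt (fun t : ℝ => t / (1 + t)) (1 / (1 + t) ^ 2) (Set.Ioi 0) t := by
    intro t ht
    simp only [Set.mem_Ioi] at ht
    have h := (hasDerivAt_id' t).div ((hasDerivAt_id' t).const_add 1) (by positivity)
    simpa [Pi.div_def] using h.hasDerivWithinAt
  have hinj : Set.InjOn (fun t : ℝ => t / (1 + t)) (Set.Ioi 0) := by
    intro t1 h1 t2 h2 h
    simp only [Set.mem_Ioi] at h1 h2
    field_simp at h
    linarith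
  have key := MeasureTheory.integral_image_eq_integral_abs_deriv_smul
    measurableSet_Ioi hderiv hinj (fun x : ℝ => (x:ℂ) ^ (a - 1) * ((1:ℂ) - x) ^ ((1 - a) - 1))
  rw [himg] at key
  have hbeta : Complex.betaIntegral a (1 - a)
      = ∫ x in Set.Ioo (0:ℝ) 1, (x:ℂ) ^ (a - 1) * ((1:ℂ) - x) ^ ((1 - a) - 1) := by
    rw [Complex.betaIntegral, intervalIntegral.integral_of_le zero_le_one,
      MeasureTheory.integral_Ioc_eq_integral_Ioo]
  have hGamma : Complex.betaIntegral a (1 - a) = ↑Real.pi / Complex.sin (Real.pi * a) := by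
    have ht : 0 < (1 - a).re := by rw [Complex.sub_re, Complex.one_re]; linarith
    have := Complex.Gamma_mul_Gamma_eq_betaIntegral h0 ht
    rw [show a + (1 - a) = 1 by ring, Complex.Gamma_one, one_mul] at this
    rw [← this, Complex.Gamma_mul_Gamma_one_sub]
  rw [← hGamma, hbeta, key]
  apply MeasureTheory.setIntegral_congr_fun measurableSet_Ioi
  intro t ht
  simp only [Set.mem_Ioi] at ht
  have h1t : (0:ℝ) < 1 + t := by linarith
  have hts : (0:ℝ) ≤ t := le_of_lt ht
  have hu : ((1+t:ℝ):ℂ) ≠ 0 := by exact_mod_cast h1t.ne'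
  simp only []
  show (t:ℂ) ^ (a - 1) / (1 + t) = _
  rw [eq_comm]
  rw [abs_of_pos (by positivity : (0:ℝ) < 1/(1+t)^2), Complex.real_smul]
  rw [show ((t/(1+t):ℝ):ℂ) = (t:ℂ) * ((1+t:ℝ):ℂ)⁻¹ by push_cast; ring]
  rw [show (1:ℂ) - (t:ℂ) * ((1+t:ℝ):ℂ)⁻¹ = ((1+t:ℝ):ℂ)⁻¹ by
    have h' : (1:ℂ) + t ≠ 0 := by exact_mod_cast hu
    push_cast
    field_simp; ring]
  rw [← Complex.ofReal_inv, Complex.mul_cpow_ofReal_nonneg hts (by positivity)]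
  rw [mul_assoc, ← Complex.cpow_add _ _ (by rw [Complex.ofReal_inv]; exact inv_ne_zero hu),
    show a - 1 + (1 - a - 1) = -1 by ring, Complex.cpow_neg, Complex.cpow_one,
    Complex.ofReal_inv, inv_inv]
  have hu' : (1:ℂ) + (t:ℂ) ≠ 0 := by push_cast at hu ⊢; exact hu
  push_cast
  field_simp

theorem stmt_7 (w : ℝ) :
    ∫ x : ℝ, Complex.exp (2 * Real.pi * Complex.I * (w : ℂ) * (x : ℂ))
        / Complex.cosh (Real.pi * (x : ℂ))
      = 1 / Complex.cosh (Real.pi * (w : ℂ)) := by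
  set a : ℂ := 1/2 + Complex.I * w with ha
  have hpi : (0:ℝ) < Real.pi := Real.pi_pos
  have hderiv : ∀ x ∈ (Set.univ : Set ℝ), HasDerivWithinAt (fun x : ℝ => Real.exp (2*Real.pi*x))
      (Real.exp (2*Real.pi*x) * (2*Real.pi)) Set.univ x := by
    intro x _
    exact (((hasDerivAt_id x).const_mul (2*Real.pi)).exp.congr_deriv (by simp only [id_eq]; ring)).hasDerivWithinAt
  have hinj : Set.InjOn (fun x : ℝ => Real.exp (2*Real.pi*x)) Set.univ := by
    intro x _ y _ h
    have := Real.exp_injective h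
    have h2 : (2*Real.pi) ≠ 0 := by positivity
    field_simp at this
    tauto
  have himg : (fun x : ℝ => Real.exp (2*Real.pi*x)) '' Set.univ = Set.Ioi 0 := by
    rw [Set.image_univ]
    ext t
    constructor
    · rintro ⟨x, rfl⟩; exact Real.exp_pos _
    · intro ht
      have h2 : 2*Real.pi * (Real.log t/(2*Real.pi)) = Real.log t := by
        field_simp
      exact ⟨Real.log t / (2*Real.pi), by show Real.exp _ = t; rw [h2, Real.exp_log ht]⟩
  have key := MeasureTheory.integral_image_eq_integral_abs_deriv_smul
    MeasurableSet.univ hderiv hinj (fun t : ℝ => (t:ℂ) ^ (a - 1) / (1 + t))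
  rw [himg, MeasureTheory.setIntegral_univ] at key
  have hre : a.re = 1/2 := by simp [ha]
  have hmel := mellin_lem a (by rw [hre]; norm_num) (by rw [hre]; norm_num)
  have hsin : Complex.sin (Real.pi * a) = Complex.cosh (Real.pi * w) := by
    rw [show (Real.pi : ℂ) * a = (Real.pi : ℂ) * w * Complex.I + Real.pi/2 by rw [ha]; ring,
      Complex.sin_add_pi_div_two, Complex.cos_mul_I]
  have hptwise : ∀ x : ℝ, |Real.exp (2*Real.pi*x) * (2*Real.pi)| •
      ((↑(Real.exp (2*Real.pi*x)) : ℂ) ^ (a - 1) / (1 + ↑(Real.exp (2*Real.pi*x))))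
      = (Real.pi : ℂ) * (Complex.exp (2 * Real.pi * Complex.I * (w : ℂ) * (x : ℂ))
          / Complex.cosh (Real.pi * (x : ℂ))) := by
    intro x
    have hE : Complex.exp ((Real.pi : ℂ) * x) ≠ 0 := Complex.exp_ne_zero _
    rw [abs_of_pos (by positivity), Complex.real_smul, Complex.ofReal_mul, Complex.ofReal_exp,
      Complex.cpow_def_of_ne_zero (Complex.exp_ne_zero _),
      Complex.log_exp (by simp [hpi]) (by simp [Real.pi_nonneg]),
      show Complex.cosh ((Real.pi:ℂ)*x) = (Complex.exp ((Real.pi:ℂ)*x) + Complex.exp (-((Real.pi:ℂ)*x)))/2 from by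
        rw [← Complex.two_cosh]; ring]
    push_cast
    rw [show (2*(Real.pi:ℂ)*x) * (a - 1) = 2 * Real.pi * Complex.I * w * x + (-(Real.pi * x)) by
        rw [ha]; ring,
      show (2*(Real.pi:ℂ)*x) = Real.pi * x + Real.pi * x by ring,
      Complex.exp_add, Complex.exp_add, Complex.exp_neg]
    have hden : (1 : ℂ) + Complex.exp ((Real.pi:ℂ) * x) ^ 2 ≠ 0 := by
      intro h
      have h2 : Complex.exp ((Real.pi:ℂ) * x) ^ 2
          = ((Real.exp (Real.pi * x) * Real.exp (Real.pi * x) : ℝ) : ℂ) := by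
        push_cast [Complex.ofReal_exp]; ring
      rw [h2] at h
      have : (1 : ℝ) + Real.exp (Real.pi * x) * Real.exp (Real.pi * x) = 0 := by
        exact_mod_cast h
      nlinarith [Real.exp_pos (Real.pi * x)]
    field_simp [hden]
    rw [eq_div_iff
      (by intro h; exact hden (by linear_combination h) :
        Complex.exp ((Real.pi:ℂ)*x) ^ 2 + 1 ≠ 0)]
    ring
  rw [funext hptwise, MeasureTheory.integral_const_mul, hmel, hsin] at key
  have hcosh : Complex.cosh ((Real.pi : ℂ) * w) ≠ 0 := by
    rw [show ((Real.pi:ℂ) * w) = ((Real.pi * w : ℝ) : ℂ) by push_cast; ring,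
      ← Complex.ofReal_cosh]
    exact_mod_cast (Real.cosh_pos (x := Real.pi * w)).ne'
  have hpi' : (Real.pi : ℂ) ≠ 0 := by exact_mod_cast hpi.ne'
  have key2 : (Real.pi:ℂ) = ((Real.pi:ℂ) * ∫ x : ℝ,
      Complex.exp (2 * Real.pi * Complex.I * (w : ℂ) * (x : ℂ))
        / Complex.cosh (Real.pi * (x : ℂ))) * Complex.cosh ((Real.pi:ℂ) * w) := by
    rw [← key, div_mul_cancel₀ _ hcosh]
  rw [eq_div_iff hcosh]
  exact mul_left_cancel₀ hpi' (by rw [mul_one]; linear_combination -key2)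
end

section
/- Fix z complex with |Im(z)| < π and δ > 0 with δ < π - |Im(z)|. Then for every ξ in the set S_δ = {ξ ∈ ℂ : dist(ξ, [0,∞)) < δ}, the function G(ξ,z) = (1/(2πi)) ∑_{n≥1} ((-1)^n/n²)·(1/(1+e^{ξ/n - z}) + 1/(1+e^{-ξ/n - z})) satisfies |G(ξ,z)| ≤ max{2, π²/(3 sin(|Im(z)| + δ))}. -/
theorem stmt_9 (z : ℂ) (δ : ℝ) (hδ : 0 < δ) (hzδ : δ < Real.pi - |z.im|)
    (ξ : ℂ)
    (hξ : Metric.infDist ξ {w : ℂ | ∃ r : ℝ, 0 ≤ r ∧ w = (r : ℂ)} < δ) :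
    ‖(1 / (2 * Real.pi * Complex.I)) *
        ∑' n : ℕ, ((-1 : ℂ) ^ (n + 1) / ((n : ℂ) + 1) ^ 2) *
          (1 / (1 + Complex.exp (ξ / ((n : ℂ) + 1) - z)) +
           1 / (1 + Complex.exp (-ξ / ((n : ℂ) + 1) - z)))‖
      ≤ max 2 (Real.pi ^ 2 / (3 * Real.sin (|z.im| + δ))) := by
  have hπ := Real.pi_pos
  set c : ℝ := |z.im| + δ with hc
  have hc0 : 0 < c := by positivity
  have hcπ : c < Real.pi := by
    have := abs_nonneg z.im; simp only [hc]; linarith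
  have hsin : 0 < Real.sin c := Real.sin_pos_of_pos_of_lt_pi hc0 hcπ
  set B : ℝ := max 1 (1 / Real.sin c) with hBdef
  have hB0 : (0:ℝ) < B := lt_of_lt_of_le one_pos (le_max_left _ _)
  -- |ξ.im| < δ
  have hξim : |ξ.im| < δ := by
    obtain ⟨w, hw, hdw⟩ := (Metric.infDist_lt_iff (by exact ⟨0, ⟨0, le_refl 0, by simp⟩⟩)).mp hξ
    obtain ⟨r, hr0, rfl⟩ := hw
    calc |ξ.im| = |(ξ - (r:ℂ)).im| := by simp
      _ ≤ ‖ξ - (r:ℂ)‖ := Complex.abs_im_le_norm _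
      _ = dist ξ (r:ℂ) := (Complex.dist_eq _ _).symm
      _ < δ := hdw
  -- key bound
  have key : ∀ w : ℂ, |w.im| < c → ‖1 / (1 + Complex.exp w)‖ ≤ B := by
    intro w hw
    rcases le_or_gt 0 (Real.cos w.im) with hcos | hcos
    · have h1 : (1:ℝ) ≤ ‖1 + Complex.exp w‖ := by
        have hre : (1 + Complex.exp w).re = 1 + Real.exp w.re * Real.cos w.im := by
          simp [Complex.exp_re]
        have := Complex.re_le_norm (1 + Complex.exp w)
        have hexp := Real.exp_pos w.re
        nlinarith
      rw [norm_div, norm_one]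
      calc 1 / ‖1 + Complex.exp w‖ ≤ 1 / 1 := by
            apply one_div_le_one_div_of_le one_pos h1
        _ = 1 := by norm_num
        _ ≤ B := le_max_left _ _
    · -- cos w.im < 0, so π/2 < |w.im| < c
      have hhalf : Real.pi / 2 < |w.im| := by
        by_contra h
        push_neg at h
        have : 0 ≤ Real.cos w.im := by
          rcases abs_le.mp h with ⟨h1, h2⟩
          exact Real.cos_nonneg_of_neg_pi_div_two_le_of_le (by linarith) h2
        linarith
      have hsinθ : Real.sin c ≤ |Real.sin w.im| := by
        have h1 : Real.sin c < Real.sin |w.im| := by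
          rw [← Real.sin_pi_sub c, ← Real.sin_pi_sub |w.im|]
          exact Real.sin_lt_sin_of_lt_of_le_pi_div_two (by linarith) (by linarith) (by linarith)
        have h2 : Real.sin |w.im| = |Real.sin w.im| := by
          rcases abs_cases w.im with ⟨h, _⟩ | ⟨h, _⟩
          · rw [h, abs_of_nonneg (Real.sin_nonneg_of_nonneg_of_le_pi (by linarith [abs_nonneg w.im, h.ge]) (by rw [← h]; linarith [abs_nonneg w.im]))]
          · rw [h, Real.sin_neg, abs_of_nonpos]
            have : 0 ≤ Real.sin (-w.im) := Real.sin_nonneg_of_nonneg_of_le_pi (by linarith [abs_nonneg w.im]) (by linarith)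
            rw [Real.sin_neg] at this; linarith
        linarith
      have habs : Real.sin c ≤ ‖1 + Complex.exp w‖ := by
        have hsq := Complex.sq_norm (1 + Complex.exp w)
        have hnsq : Complex.normSq (1 + Complex.exp w)
            = (Real.exp w.re + Real.cos w.im)^2 + (Real.sin w.im)^2 := by
          rw [Complex.normSq_apply]
          have hre : (1 + Complex.exp w).re = 1 + Real.exp w.re * Real.cos w.im := by
            simp [Complex.exp_re]
          have him : (1 + Complex.exp w).im = Real.exp w.re * Real.sin w.im := by
            simp [Complex.exp_im]
          rw [hre, him]
          have h := Real.sin_sq_add_cos_sq w.im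
          linear_combination (Real.exp w.re ^ 2 - 1) * h
        have hA := norm_nonneg (1 + Complex.exp w)
        have habs2 : |Real.sin w.im| ^ 2 ≤ ‖1 + Complex.exp w‖ ^ 2 := by
          rw [hsq, hnsq, sq_abs]; nlinarith
        nlinarith [abs_nonneg (Real.sin w.im)]
      rw [norm_div, norm_one]
      calc 1 / ‖1 + Complex.exp w‖ ≤ 1 / Real.sin c :=
            one_div_le_one_div_of_le hsin habs
        _ ≤ B := le_max_right _ _
  -- imaginary part bounds
  have him : ∀ n : ℕ, ∀ s : ℝ, |s| = 1 → |((s • ξ) / ((n : ℂ) + 1) - z).im| < c := by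
    intro n s hs
    have hcast : ((n : ℂ) + 1) = ((n + 1 : ℝ) : ℂ) := by push_cast; ring
    have him1 : ((s • ξ) / ((n : ℂ) + 1) - z).im = s * ξ.im / (n + 1) - z.im := by
      rw [hcast, Complex.sub_im, Complex.div_ofReal_im]
      simp [Complex.smul_im]
    rw [him1]
    have hn1 : (1:ℝ) ≤ (n:ℝ) + 1 := le_add_of_nonneg_left (by positivity)
    have h2 : |s * ξ.im / ((n:ℝ) + 1)| ≤ |ξ.im| := by
      rw [abs_div, abs_mul, hs, one_mul]
      rw [abs_of_nonneg (by positivity : (0:ℝ) ≤ (n:ℝ)+1)]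
      exact div_le_self (abs_nonneg _) hn1
    calc |s * ξ.im / ((n:ℝ)+1) - z.im| ≤ |s * ξ.im / ((n:ℝ)+1)| + |z.im| := abs_sub _ _
      _ ≤ |ξ.im| + |z.im| := by linarith
      _ < δ + |z.im| := by linarith
      _ = c := by rw [hc]; ring
  -- termwise bound
  have hterm : ∀ n : ℕ,
      ‖((-1 : ℂ) ^ (n + 1) / ((n : ℂ) + 1) ^ 2) *
          (1 / (1 + Complex.exp (ξ / ((n : ℂ) + 1) - z)) +
           1 / (1 + Complex.exp (-ξ / ((n : ℂ) + 1) - z)))‖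
      ≤ (1 / ((n:ℝ) + 1) ^ 2) * (2 * B) := by
    intro n
    rw [norm_mul]
    have hco : ‖(-1 : ℂ) ^ (n + 1) / ((n : ℂ) + 1) ^ 2‖ = 1 / ((n:ℝ)+1)^2 := by
      rw [norm_div, norm_pow, norm_pow, norm_neg, norm_one, one_pow]
      congr 1
      have : ((n : ℂ) + 1) = ((n + 1 : ℝ) : ℂ) := by push_cast; ring
      rw [this, Complex.norm_real, Real.norm_eq_abs, abs_of_pos (by positivity)]
    rw [hco]
    have hb1 : ‖1 / (1 + Complex.exp (ξ / ((n : ℂ) + 1) - z))‖ ≤ B := by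
      have := key (ξ / ((n : ℂ) + 1) - z) (by simpa using him n 1 (by norm_num))
      simpa using this
    have hb2 : ‖1 / (1 + Complex.exp (-ξ / ((n : ℂ) + 1) - z))‖ ≤ B := by
      have := key (-ξ / ((n : ℂ) + 1) - z) ?_
      · simpa using this
      · have := him n (-1) (by norm_num)
        simpa [neg_smul, one_smul, neg_div] using this
    have hsum : ‖1 / (1 + Complex.exp (ξ / ((n : ℂ) + 1) - z)) +
         1 / (1 + Complex.exp (-ξ / ((n : ℂ) + 1) - z))‖ ≤ 2 * B := by
      calc ‖_‖ ≤ _ + _ := norm_add_le _ _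
        _ ≤ 2 * B := by linarith
    have h0 : (0:ℝ) ≤ 1 / ((n:ℝ)+1)^2 := by positivity
    exact mul_le_mul_of_nonneg_left hsum h0
  -- has sum for the majorant
  have hgsum : HasSum (fun n : ℕ => (1 / ((n:ℝ) + 1) ^ 2) * (2 * B))
      (Real.pi ^ 2 / 6 * (2 * B)) := by
    have h0 : HasSum (fun n : ℕ => (1:ℝ) / ((n:ℝ) + 1) ^ 2) (Real.pi ^ 2 / 6) := by
      have h := (hasSum_nat_add_iff' (f := fun n : ℕ => (1:ℝ) / (n : ℝ) ^ 2) 1).mpr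
        hasSum_zeta_two
      simpa using h
    exact h0.mul_right _
  -- bound tsum
  have htsum : ‖∑' n : ℕ, ((-1 : ℂ) ^ (n + 1) / ((n : ℂ) + 1) ^ 2) *
          (1 / (1 + Complex.exp (ξ / ((n : ℂ) + 1) - z)) +
           1 / (1 + Complex.exp (-ξ / ((n : ℂ) + 1) - z)))‖
      ≤ Real.pi ^ 2 / 6 * (2 * B) := by
    refine tsum_of_norm_bounded (f := fun n : ℕ => ((-1 : ℂ) ^ (n + 1) / ((n : ℂ) + 1) ^ 2) *
          (1 / (1 + Complex.exp (ξ / ((n : ℂ) + 1) - z)) +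
           1 / (1 + Complex.exp (-ξ / ((n : ℂ) + 1) - z)))) hgsum (fun n => ?_)
    exact hterm n
  have hcoef : ‖1 / (2 * Real.pi * Complex.I)‖ = 1 / (2 * Real.pi) := by
    rw [norm_div, norm_one, norm_mul, Complex.norm_I, mul_one, norm_mul,
      Complex.norm_two, Complex.norm_real, Real.norm_eq_abs, abs_of_pos hπ]
  rw [norm_mul, hcoef]
  have hfin : 1 / (2 * Real.pi) * (Real.pi ^ 2 / 6 * (2 * B))
      ≤ max 2 (Real.pi ^ 2 / (3 * Real.sin (|z.im| + δ))) := by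
    have heq : 1 / (2 * Real.pi) * (Real.pi ^ 2 / 6 * (2 * B)) = Real.pi * B / 6 := by
      field_simp
    rw [heq]
    rcases max_cases (1:ℝ) (1 / Real.sin c) with ⟨hB, _⟩ | ⟨hB, _⟩
    · apply le_max_of_le_left
      rw [hBdef, hB]
      nlinarith [Real.pi_lt_d2]
    · apply le_max_of_le_right
      rw [hBdef, hB, ← hc]
      rw [div_le_div_iff₀ (by norm_num) (by positivity)]
      have hπ2 : Real.pi ≤ Real.pi ^ 2 := by nlinarith [Real.pi_gt_three]
      calc Real.pi * (1 / Real.sin c) * (3 * Real.sin c)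
          = 3 * Real.pi := by field_simp
        _ ≤ Real.pi ^ 2 * 6 := by nlinarith
  calc (1 / (2 * Real.pi)) * ‖_‖
      ≤ (1 / (2 * Real.pi)) * (Real.pi ^ 2 / 6 * (2 * B)) := by
        exact mul_le_mul_of_nonneg_left htsum (by positivity)
    _ ≤ _ := hfin
end

section
/- Let f be holomorphic on the strip |Im(z)| < π and fix z real. Then the Borel transform of the formal power series φ_f(τ,z) = ∑_{n≥1} (B_{2n}(1/2)/(2n)!)·f^{(2n)}(z)·(2πi)^{2n-1}·τ^{2n-1}, namely G_f(ξ,z) = ∑_{n≥1} (B_{2n}(1/2)/(2n)!)·(f^{(2n)}(z)/(2n-2)!)·(2πi)^{2n-1}·ξ^{2n-2}, coincides (as a convergent power series near ξ = 0) with (i/(2π)) ∑_{n≥1} ((-1)^n/n²)·(f''(z + ξ/n) + f''(z - ξ/n)), provided f'' is bounded on the strip. -/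
open Complex Real

noncomputable def SvalR (k : ℕ) : ℝ :=
  (-1 : ℝ) ^ (k + 2) * (2 * π) ^ (2 * (k + 1)) / 2 / ((2 * (k + 1)).factorial : ℝ) *
    (((Polynomial.bernoulli (2 * (k + 1))).eval (1/2 : ℚ) : ℚ) : ℝ)

lemma alt_hasSum (k : ℕ) :
    HasSum (fun n : ℕ => (-1 : ℝ) ^ (n + 1) / ((n : ℝ) + 1) ^ (2 * (k + 1))) (SvalR k) := by
  have h := hasSum_one_div_nat_pow_mul_cos (k := k + 1) (by omega)
    (x := (1/2 : ℝ)) (by norm_num)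
  have hB : (Polynomial.map (algebraMap ℚ ℝ) (Polynomial.bernoulli (2 * (k+1)))).eval
      ((1:ℝ)/2) = (((Polynomial.bernoulli (2 * (k + 1))).eval (1/2 : ℚ) : ℚ) : ℝ) := by
    have : ((1:ℝ)/2) = algebraMap ℚ ℝ (1/2 : ℚ) := by norm_num
    rw [this, Polynomial.eval_map, Polynomial.eval₂_at_apply]
    simp
  rw [hB] at h
  have h2 : HasSum (fun n : ℕ =>
      1 / ((n + 1 : ℕ) : ℝ) ^ (2 * (k+1)) * Real.cos (2 * π * ((n+1 : ℕ)) * (1/2)))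
      ((-1 : ℝ) ^ (k + 1 + 1) * (2 * π) ^ (2 * (k+1)) / 2 / ((2 * (k+1)).factorial : ℝ) *
        (((Polynomial.bernoulli (2 * (k + 1))).eval (1/2 : ℚ) : ℚ) : ℝ)) := by
    have h3 := (hasSum_nat_add_iff'
      (f := fun n : ℕ => 1 / (n : ℝ) ^ (2 * (k+1)) * Real.cos (2 * π * n * (1/2))) 1).mpr h
    simpa using h3
  rw [SvalR]
  convert h2 using 2 with n
  have hc : 2 * π * ((n+1 : ℕ) : ℝ) * (1/2) = ((n+1 : ℕ) : ℝ) * π := by push_cast; ring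
  rw [hc]
  have := Real.cos_nat_mul_pi_sub 0 (n+1)
  rw [sub_zero, Real.cos_zero, mul_one] at this
  rw [this]
  push_cast
  ring

lemma alt_hasSum_c (k : ℕ) :
    HasSum (fun n : ℕ => (-1 : ℂ) ^ (n + 1) / ((n : ℂ) + 1) ^ (2 * (k + 1)))
      ((SvalR k : ℝ) : ℂ) := by
  have := (Complex.hasSum_ofReal.mpr (alt_hasSum k))
  convert this using 2 with n
  push_cast
  ring

lemma coef_eq (k : ℕ) :
    ((((Polynomial.bernoulli (2 * (k + 1))).eval (1/2 : ℚ) : ℚ) : ℂ))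
        / ((2 * (k + 1)).factorial : ℂ) * (2 * (π : ℂ) * I) ^ (2 * k + 1)
      = (I / π) * ((SvalR k : ℝ) : ℂ) := by
  have hπ : (π : ℂ) ≠ 0 := Complex.ofReal_ne_zero.mpr Real.pi_ne_zero
  have hfac : (((2 * (k + 1)).factorial : ℕ) : ℂ) ≠ 0 :=
    Nat.cast_ne_zero.mpr (Nat.factorial_ne_zero _)
  have hI : (I : ℂ) ^ (2 * k + 1) = (-1) ^ k * I := by
    rw [pow_succ, pow_mul, Complex.I_sq]
  rw [mul_pow, hI, SvalR]
  push_cast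
  field_simp
  ring

open Metric
open scoped NNReal

set_option maxHeartbeats 2000000 in
theorem stmt_14 (f : ℂ → ℂ)
    (hf : DifferentiableOn ℂ f {w : ℂ | |w.im| < Real.pi})
    (hbd : ∃ C : ℝ, ∀ w : ℂ, |w.im| < Real.pi →
      ‖iteratedDeriv 2 f w‖ ≤ C)
    (z : ℝ) :
    ∃ ε > (0 : ℝ), ∀ ξ : ℂ, ‖ξ‖ < ε →
      ∑' n : ℕ,
          ((((Polynomial.bernoulli (2 * (n + 1))).eval (1/2 : ℚ) : ℚ) : ℂ)
              / ((2 * (n + 1)).factorial : ℂ)) *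
            (iteratedDeriv (2 * (n + 1)) f (z : ℂ) / ((2 * n).factorial : ℂ)) *
            (2 * (Real.pi : ℂ) * Complex.I) ^ (2 * n + 1) * ξ ^ (2 * n)
        = (Complex.I / (2 * Real.pi)) *
            ∑' n : ℕ, ((-1 : ℂ) ^ (n + 1) / ((n : ℂ) + 1) ^ 2) *
              (iteratedDeriv 2 f ((z : ℂ) + ξ / ((n : ℂ) + 1)) +
               iteratedDeriv 2 f ((z : ℂ) - ξ / ((n : ℂ) + 1))) := by
  clear hbd
  set g : ℂ → ℂ := iteratedDeriv 2 f with hgdef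
  set S : Set ℂ := {w : ℂ | |w.im| < Real.pi} with hSdef
  have hopen : IsOpen S := isOpen_lt (Complex.continuous_im.abs) continuous_const
  have hfa : AnalyticOnNhd ℂ f S := hf.analyticOnNhd hopen
  have hga : AnalyticOnNhd ℂ g S := by
    have : g = deriv (deriv f) := by
      rw [hgdef, iteratedDeriv_succ, iteratedDeriv_one]
    rw [this]
    exact hfa.deriv.deriv
  have hball : closedBall (z : ℂ) ((2 : ℝ≥0) : ℝ) ⊆ S := by
    intro w hw
    simp only [hSdef, Set.mem_setOf_eq]
    have h1 : |w.im| = |(w - (z : ℂ)).im| := by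
      simp [Complex.sub_im]
    rw [h1]
    calc |(w - (z : ℂ)).im| ≤ ‖w - (z : ℂ)‖ := Complex.abs_im_le_norm _
      _ ≤ 2 := by simpa [Complex.dist_eq] using (mem_closedBall.mp hw)
      _ < π := by linarith [Real.pi_gt_three]
  have hgd : DifferentiableOn ℂ g (closedBall (z : ℂ) ((2 : ℝ≥0) : ℝ)) :=
    (fun w hw => ((hga w (hball hw)).differentiableAt.differentiableWithinAt))
  have hps : HasFPowerSeriesOnBall g (cauchyPowerSeries g (z : ℂ) 2) (z : ℂ) 2 :=
    hgd.hasFPowerSeriesOnBall (by norm_num)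
  set p := cauchyPowerSeries g (z : ℂ) 2 with hpdef
  -- coefficient = iterated derivative
  have hcoeff : ∀ m : ℕ, iteratedDeriv m g (z : ℂ) = (m.factorial : ℂ) * p.coeff m := by
    intro m
    have h1 := hps.factorial_smul (y := (1 : ℂ)) m
    rw [iteratedDeriv_eq_iteratedFDeriv, ← h1]
    have h2 : (p m fun _ => (1:ℂ)) = p.coeff m := rfl
    rw [h2, nsmul_eq_mul]
  -- iterated derivative of g vs f
  have hid : ∀ j : ℕ, iteratedDeriv j g = iteratedDeriv (j + 2) f := by
    intro j
    induction j with
    | zero => simp [hgdef]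
    | succ j ih =>
        rw [iteratedDeriv_succ, ih, ← iteratedDeriv_succ]
  -- coefficient bound
  obtain ⟨Cb, hCb0, hCb⟩ := p.norm_mul_pow_le_of_lt_radius
    (r := 1) (lt_of_lt_of_le (by norm_num) hps.r_le)
  have hcb : ∀ m : ℕ, ‖p.coeff m‖ ≤ Cb := by
    intro m
    have := hCb m
    simpa [FormalMultilinearSeries.norm_apply_eq_norm_coef] using this
  refine ⟨1/2, by norm_num, fun ξ hξ => ?_⟩
  -- power series sums
  have hsum_w : ∀ w : ℂ, ‖w‖ < 2 →
      HasSum (fun j : ℕ => p.coeff j * w ^ j) (g ((z : ℂ) + w)) := by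
    intro w hw
    have hmem : w ∈ Metric.eball (0 : ℂ) ((2 : ℝ≥0) : ENNReal) := by
      rw [Metric.mem_eball, edist_zero_right]
      exact_mod_cast (by exact_mod_cast hw : ‖w‖₊ < (2 : ℝ≥0))
    have := hps.hasSum hmem
    have heq : (fun j : ℕ => p.coeff j * w ^ j) = fun j => p j fun _ => w := by
      funext j
      rw [FormalMultilinearSeries.apply_eq_pow_smul_coeff, smul_eq_mul]
      ring
    rw [heq]
    exact this
  -- even part of power series
  have heven : ∀ w : ℂ, ‖w‖ < 2 →
      HasSum (fun k : ℕ => 2 * p.coeff (2 * k) * w ^ (2 * k))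
        (g ((z : ℂ) + w) + g ((z : ℂ) - w)) := by
    intro w hw
    have h1 := hsum_w w hw
    have h2 := hsum_w (-w) (by simpa using hw)
    rw [← sub_eq_add_neg] at h2
    have h3 := h1.add h2
    have hinj : Function.Injective (fun k : ℕ => 2 * k) := fun a b h => by simp only [] at h; omega
    have hvanish : ∀ j ∉ Set.range (fun k : ℕ => 2 * k),
        p.coeff j * w ^ j + p.coeff j * (-w) ^ j = 0 := by
      intro j hj
      have hodd : Odd j := by
        rcases Nat.even_or_odd j with he | ho
        · obtain ⟨c, hc⟩ := he
          exact absurd ⟨c, by show 2 * c = j; omega⟩ hj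
        · exact ho
      rw [hodd.neg_pow]
      ring
    have h4 := (hinj.hasSum_iff hvanish).mpr h3
    have heq2 : (fun k : ℕ => 2 * p.coeff (2 * k) * w ^ (2 * k))
        = (fun j : ℕ => p.coeff j * w ^ j + p.coeff j * (-w) ^ j) ∘ (fun k : ℕ => 2 * k) := by
      funext k
      simp only [Function.comp]
      rw [Even.neg_pow (even_two_mul k)]
      ring
    rw [heq2]
    exact h4
  have hwle : ∀ n : ℕ, ‖ξ / ((n : ℂ) + 1)‖ ≤ ‖ξ‖ := by
    intro n
    rw [norm_div]
    have h1 : ((n : ℂ) + 1) = ((n + 1 : ℕ) : ℂ) := by push_cast; ring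
    rw [h1, Complex.norm_natCast]
    apply div_le_self (norm_nonneg _)
    exact_mod_cast Nat.succ_le_succ (Nat.zero_le n)
  have hwlt2 : ∀ n : ℕ, ‖ξ / ((n : ℂ) + 1)‖ < 2 :=
    fun n => lt_of_le_of_lt (hwle n) (lt_trans hξ (by norm_num))
  set T : ℕ × ℕ → ℂ := fun q =>
    ((-1 : ℂ) ^ (q.1 + 1) / ((q.1 : ℂ) + 1) ^ 2) *
      (2 * p.coeff (2 * q.2) * (ξ / ((q.1 : ℂ) + 1)) ^ (2 * q.2)) with hTdef
  have habs1 : ∀ n : ℕ, ‖(-1 : ℂ) ^ (n + 1) / ((n : ℂ) + 1) ^ 2‖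
      = 1 / ((n : ℝ) + 1) ^ 2 := by
    intro n
    have h1 : ((n : ℂ) + 1) = ((n + 1 : ℕ) : ℂ) := by push_cast; ring
    rw [norm_div, norm_pow, norm_pow, h1, Complex.norm_natCast, norm_neg, norm_one, one_pow]
    push_cast
    ring
  have hTsum : Summable T := by
    have h1 : Summable (fun n : ℕ => 1 / ((n : ℝ) + 1) ^ 2) := by
      have h0 := (summable_nat_add_iff (f := fun n : ℕ => 1 / (n : ℝ) ^ 2) 1).mpr
        (Real.summable_one_div_nat_pow.mpr one_lt_two)
      refine h0.congr fun n => ?_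
      push_cast
      ring
    have h2 : Summable (fun k : ℕ => 2 * Cb * (1/4 : ℝ) ^ k) :=
      (summable_geometric_of_lt_one (by norm_num) (by norm_num)).mul_left _
    have hb := h1.mul_of_nonneg h2 (fun n => by positivity) (fun k => by positivity)
    refine Summable.of_norm_bounded hb ?_
    rintro ⟨n, k⟩
    simp only [hTdef]
    rw [norm_mul, habs1]
    have h3 : ‖2 * p.coeff (2 * k) * (ξ / ((n : ℂ) + 1)) ^ (2 * k)‖
        ≤ 2 * Cb * (1/4 : ℝ) ^ k := by
      rw [norm_mul, norm_mul, norm_pow, Complex.norm_two]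
      have hw4 : ‖ξ / ((n : ℂ) + 1)‖ ^ (2 * k) ≤ (1/4 : ℝ) ^ k := by
        calc ‖ξ / ((n : ℂ) + 1)‖ ^ (2 * k) ≤ (1/2 : ℝ) ^ (2 * k) := by
              apply pow_le_pow_left₀ (norm_nonneg _)
              exact (hwle n).trans hξ.le
          _ = (1/4 : ℝ) ^ k := by rw [pow_mul]; norm_num
      exact mul_le_mul (mul_le_mul_of_nonneg_left (hcb _) (by norm_num : (0:ℝ) ≤ 2)) hw4
        (by positivity) (by positivity)
    exact mul_le_mul_of_nonneg_left h3 (by positivity)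
  have hfib1 : ∀ n : ℕ, HasSum (fun k => T (n, k))
      (((-1 : ℂ) ^ (n + 1) / ((n : ℂ) + 1) ^ 2) *
        (g ((z : ℂ) + ξ / ((n : ℂ) + 1)) + g ((z : ℂ) - ξ / ((n : ℂ) + 1)))) :=
    fun n => (heven _ (hwlt2 n)).mul_left _
  have htot1 : HasSum (fun n : ℕ => ((-1 : ℂ) ^ (n + 1) / ((n : ℂ) + 1) ^ 2) *
      (g ((z : ℂ) + ξ / ((n : ℂ) + 1)) + g ((z : ℂ) - ξ / ((n : ℂ) + 1)))) (∑' q, T q) :=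
    HasSum.prod_fiberwise hTsum.hasSum hfib1
  have hfib2 : ∀ k : ℕ, HasSum (fun n => T (n, k))
      ((2 * p.coeff (2 * k) * ξ ^ (2 * k)) * ((SvalR k : ℝ) : ℂ)) := by
    intro k
    have h5 := (alt_hasSum_c k).mul_left (2 * p.coeff (2 * k) * ξ ^ (2 * k))
    have heq3 : (fun n : ℕ => T (n, k)) = fun n : ℕ =>
        (2 * p.coeff (2 * k) * ξ ^ (2 * k)) *
          ((-1 : ℂ) ^ (n + 1) / ((n : ℂ) + 1) ^ (2 * (k + 1))) := by
      funext n
      simp only [hTdef]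
      have hne : ((n : ℂ) + 1) ≠ 0 := by
        have h1 : ((n : ℂ) + 1) = ((n + 1 : ℕ) : ℂ) := by push_cast; ring
        rw [h1]
        exact Nat.cast_ne_zero.mpr (Nat.succ_ne_zero n)
      rw [div_pow]
      have hp2 : ((n : ℂ) + 1) ^ (2 * (k + 1)) = ((n : ℂ) + 1) ^ 2 * ((n : ℂ) + 1) ^ (2 * k) := by
        rw [← pow_add]
        ring_nf
      rw [hp2]
      field_simp
    rw [heq3]
    exact h5
  have hswap : HasSum (fun q : ℕ × ℕ => T (q.2, q.1)) (∑' q, T q) :=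
    ((Equiv.prodComm ℕ ℕ).hasSum_iff).mpr hTsum.hasSum
  have htot2 : HasSum (fun k : ℕ => (2 * p.coeff (2 * k) * ξ ^ (2 * k)) * ((SvalR k : ℝ) : ℂ))
      (∑' q, T q) := HasSum.prod_fiberwise hswap hfib2
  rw [htot1.tsum_eq, ← htot2.tsum_eq, ← tsum_mul_left]
  refine tsum_congr fun k => ?_
  have h6 : iteratedDeriv (2 * (k + 1)) f (z : ℂ) = (((2 * k).factorial : ℕ) : ℂ) * p.coeff (2 * k) := by
    rw [show 2 * (k + 1) = 2 * k + 2 by ring, ← hid (2 * k), hcoeff]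
  have h7 : (((2 * k).factorial : ℕ) : ℂ) ≠ 0 := Nat.cast_ne_zero.mpr (Nat.factorial_ne_zero _)
  rw [h6]
  have h8 := coef_eq k
  calc ((((Polynomial.bernoulli (2 * (k + 1))).eval (1/2 : ℚ) : ℚ) : ℂ)
          / ((2 * (k + 1)).factorial : ℂ)) *
        ((((2 * k).factorial : ℕ) : ℂ) * p.coeff (2 * k) / (((2 * k).factorial : ℕ) : ℂ)) *
        (2 * (π : ℂ) * I) ^ (2 * k + 1) * ξ ^ (2 * k)
      = ((((Polynomial.bernoulli (2 * (k + 1))).eval (1/2 : ℚ) : ℚ) : ℂ)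
          / ((2 * (k + 1)).factorial : ℂ) * (2 * (π : ℂ) * I) ^ (2 * k + 1)) *
        (p.coeff (2 * k) * ξ ^ (2 * k)) := by
        rw [mul_comm (((((2 * k).factorial : ℕ)) : ℂ)) (p.coeff (2 * k)),
          mul_div_assoc (p.coeff (2 * k)), div_self h7, mul_one]
        ring
    _ = ((I / π) * ((SvalR k : ℝ) : ℂ)) * (p.coeff (2 * k) * ξ ^ (2 * k)) := by rw [h8]
    _ = I / (2 * π) * (2 * p.coeff (2 * k) * ξ ^ (2 * k) * ((SvalR k : ℝ) : ℂ)) := by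
        have hπ : (π : ℂ) ≠ 0 := Complex.ofReal_ne_zero.mpr Real.pi_ne_zero
        field_simp
end
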